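/- Let 0 < p < 1 and let a, c, z be complex numbers with z ≠ 0 and c ≠ p^{−k} for every natural number k. Define f(w) = ₁φ₁(a;c;p,w). Then (c − a·z)·f(p·z) + (z − c − p)·f(z) + p·f(z/p) = 0. -/

import Mathlib

open scoped BigOperators

/-- The q-shifted factorial `(a;p)_n = ∏_{i=0}^{n-1} (1 - a p^i)`. -/
noncomputable def qPoch (a p : ℂ) (n : ℕ) : ℂ :=
  ∏ i ∈ Finset.range n, (1 - a * p ^ i)

/-- The basic hypergeometric series
`₁φ₁(a;c;p,z) = ∑_{j=0}^∞ ((a;p)_j / ((p;p)_j (c;p)_j)) (-1)^j p^(j(j-1)/2) z^j`. -/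
noncomputable def phi11 (a c p z : ℂ) : ℂ :=
  ∑' j : ℕ, qPoch a p j / (qPoch p p j * qPoch c p j) * (-1) ^ j *
    p ^ (j * (j - 1) / 2) * z ^ j

noncomputable def tcoef (a c p : ℂ) (j : ℕ) : ℂ :=
  qPoch a p j / (qPoch p p j * qPoch c p j) * (-1) ^ j * p ^ (j * (j - 1) / 2)

lemma tri_succ (j : ℕ) : (j + 1) * ((j + 1) - 1) / 2 = j * (j - 1) / 2 + j := by
  have h1 : (j + 1) * ((j + 1) - 1) / 2 = (j + 1).choose 2 := by
    rw [Nat.choose_two_right]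
  have h2 : j * (j - 1) / 2 = j.choose 2 := by rw [Nat.choose_two_right]
  rw [h1, h2, Nat.choose_succ_succ, Nat.choose_one_right, Nat.add_comm]

lemma qPoch_succ (a p : ℂ) (j : ℕ) :
    qPoch a p (j + 1) = qPoch a p j * (1 - a * p ^ j) := by
  rw [qPoch, Finset.prod_range_succ, qPoch]

lemma tcoef_succ (a c p : ℂ) (hP : ∀ i : ℕ, (1 : ℂ) - p ^ (i + 1) ≠ 0)
    (hC : ∀ i : ℕ, (1 : ℂ) - c * p ^ i ≠ 0) (j : ℕ) :
    tcoef a c p (j + 1) * ((1 - p ^ (j + 1)) * (1 - c * p ^ j)) =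
      -(tcoef a c p j * (1 - a * p ^ j) * p ^ j) := by
  have hQp : ∀ n : ℕ, qPoch p p n ≠ 0 := by
    intro n
    rw [qPoch]
    refine Finset.prod_ne_zero_iff.2 fun i _ => ?_
    rw [← pow_succ']
    exact hP i
  have hQc : ∀ n : ℕ, qPoch c p n ≠ 0 := by
    intro n
    rw [qPoch]
    exact Finset.prod_ne_zero_iff.2 fun i _ => hC i
  rw [tcoef, tcoef, qPoch_succ, qPoch_succ, qPoch_succ, tri_succ, pow_add]
  have hps : p * p ^ j = p ^ (j + 1) := (pow_succ' p j).symm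
  rw [hps]
  have h1 := hQp j; have h2 := hQc j; have h3 := hP j; have h4 := hC j
  have h5 : 1 - p ^ j * c ≠ 0 := by rw [mul_comm]; exact h4
  field_simp
  ring

open Filter Topology

lemma summable_tcoef (a c p w : ℂ) (hpn : ‖p‖ < 1)
    (hP : ∀ i : ℕ, (1 : ℂ) - p ^ (i + 1) ≠ 0)
    (hC : ∀ i : ℕ, (1 : ℂ) - c * p ^ i ≠ 0) :
    Summable (fun j : ℕ => tcoef a c p j * w ^ j) := by
  have hpow : Tendsto (fun j : ℕ => p ^ j) atTop (𝓝 0) :=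
    tendsto_pow_atTop_nhds_zero_of_norm_lt_one hpn
  have hq : Tendsto
      (fun j : ℕ => ‖-((1 - a * p ^ j) * p ^ j * w) / ((1 - p ^ (j + 1)) * (1 - c * p ^ j))‖)
      atTop (𝓝 0) := by
    have hnum : Tendsto (fun j : ℕ => -((1 - a * p ^ j) * p ^ j * w)) atTop
        (𝓝 (-((1 - a * 0) * 0 * w))) :=
      (((tendsto_const_nhds.sub (tendsto_const_nhds.mul hpow)).mul hpow).mul
        tendsto_const_nhds).neg
    have h1 : Tendsto (fun j : ℕ => p ^ (j + 1)) atTop (𝓝 (p * 0)) := by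
      simp only [pow_succ']
      exact tendsto_const_nhds.mul hpow
    have hden : Tendsto (fun j : ℕ => (1 - p ^ (j + 1)) * (1 - c * p ^ j)) atTop
        (𝓝 ((1 - p * 0) * (1 - c * 0))) :=
      (tendsto_const_nhds.sub h1).mul (tendsto_const_nhds.sub (tendsto_const_nhds.mul hpow))
    have := (hnum.div hden (by norm_num)).norm
    simpa using this
  have hev : ∀ᶠ j : ℕ in atTop,
      ‖tcoef a c p (j + 1) * w ^ (j + 1)‖ ≤ (1 / 2 : ℝ) * ‖tcoef a c p j * w ^ j‖ := by
    filter_upwards [hq.eventually_lt_const (by norm_num : (0:ℝ) < 1/2)] with j hj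
    have hd : ((1 : ℂ) - p ^ (j + 1)) * (1 - c * p ^ j) ≠ 0 := mul_ne_zero (hP j) (hC j)
    have ht1 : tcoef a c p (j + 1) = -(tcoef a c p j * (1 - a * p ^ j) * p ^ j) /
        ((1 - p ^ (j + 1)) * (1 - c * p ^ j)) := (eq_div_iff hd).2 (tcoef_succ a c p hP hC j)
    have hrec : tcoef a c p (j + 1) * w ^ (j + 1) = (tcoef a c p j * w ^ j) *
        (-((1 - a * p ^ j) * p ^ j * w) / ((1 - p ^ (j + 1)) * (1 - c * p ^ j))) := by
      rw [ht1, pow_succ]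
      ring
    rw [hrec, norm_mul, mul_comm (1/2 : ℝ)]
    exact mul_le_mul_of_nonneg_left hj.le (norm_nonneg _)
  exact summable_of_ratio_norm_eventually_le (by norm_num) hev


lemma phi11_eq (a c p w : ℂ) : phi11 a c p w = ∑' j : ℕ, tcoef a c p j * w ^ j := rfl

/-- The function `f(w) = ₁φ₁(a;c;p,w)` satisfies the three-term recursion
`(c - a z) f(p z) + (z - c - p) f(z) + p f(z/p) = 0`. -/
theorem phi11_recursion (p : ℝ) (hp0 : 0 < p) (hp1 : p < 1) (a c z : ℂ)
    (hz : z ≠ 0) (hc : ∀ k : ℕ, c ≠ (p : ℂ) ^ (-(k : ℤ))) :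
    (c - a * z) * phi11 a c p ((p : ℂ) * z) + (z - c - (p : ℂ)) * phi11 a c p z +
      (p : ℂ) * phi11 a c p (z / (p : ℂ)) = 0 := by
  have hpne : (p : ℂ) ≠ 0 := by
    exact_mod_cast (Complex.ofReal_ne_zero.2 hp0.ne')
  have hP : ∀ i : ℕ, (1 : ℂ) - (p : ℂ) ^ (i + 1) ≠ 0 := by
    intro i h
    have h1 : ((p : ℂ)) ^ (i + 1) = 1 := by linear_combination -h
    have h2 : (p : ℝ) ^ (i + 1) = 1 := by
      exact_mod_cast h1
    have : p ^ (i + 1) < 1 := pow_lt_one₀ hp0.le hp1 (Nat.succ_ne_zero i)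
    linarith
  have hC : ∀ i : ℕ, (1 : ℂ) - c * (p : ℂ) ^ i ≠ 0 := by
    intro i h
    have h1 : c * (p : ℂ) ^ i = 1 := by linear_combination -h
    have h2 : c = ((p : ℂ) ^ i)⁻¹ := eq_inv_of_mul_eq_one_left (by linear_combination h1)
    exact hc i (by rw [h2, ← zpow_natCast, ← zpow_neg])
  have hpn : ‖(p : ℂ)‖ < 1 := by
    rw [Complex.norm_real, Real.norm_eq_abs, abs_of_pos hp0]
    exact hp1
  have S1 : Summable (fun j : ℕ => tcoef a c (p : ℂ) j * ((p : ℂ) * z) ^ j) := summable_tcoef a c _ _ hpn hP hC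
  have S2 : Summable (fun j : ℕ => tcoef a c (p : ℂ) j * z ^ j) := summable_tcoef a c _ _ hpn hP hC
  have S3 : Summable (fun j : ℕ => tcoef a c (p : ℂ) j * (z / (p : ℂ)) ^ j) := summable_tcoef a c _ _ hpn hP hC
  have hpow : Tendsto (fun j : ℕ => (p : ℂ) ^ j) atTop (𝓝 0) :=
    tendsto_pow_atTop_nhds_zero_of_norm_lt_one hpn
  set D : ℕ → ℂ := fun j => tcoef a c (p : ℂ) j * z ^ j * (c * (p : ℂ) ^ j - c - (p : ℂ)) +
    (p : ℂ) * (tcoef a c (p : ℂ) j * (z / (p : ℂ)) ^ j) with hD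
  set F : ℕ → ℂ := fun j => (c - a * z) * (tcoef a c (p : ℂ) j * ((p : ℂ) * z) ^ j) +
    ((z - c - (p : ℂ)) * (tcoef a c (p : ℂ) j * z ^ j) + (p : ℂ) * (tcoef a c (p : ℂ) j * (z / (p : ℂ)) ^ j)) with hF
  have hterm : ∀ j : ℕ, F j = D j - D (j + 1) := by
    intro j
    have hd : ((1 : ℂ) - (p : ℂ) ^ (j + 1)) * (1 - c * (p : ℂ) ^ j) ≠ 0 :=
      mul_ne_zero (hP j) (hC j)
    have key := tcoef_succ a c (p : ℂ) hP hC j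
    have hppow : ((p : ℂ)) ^ j ≠ 0 := pow_ne_zero _ hpne
    have hD1 : D (j + 1) = -(tcoef a c (p : ℂ) j * (1 - a * (p : ℂ) ^ j) * (z ^ j * z)) := by
      simp only [pow_succ] at key
      simp only [hD, div_pow, pow_succ]
      field_simp
      linear_combination key
    rw [hF, hD1]
    simp only [hD, mul_pow]
    ring
  have hFsum : Summable F := (S1.mul_left _).add ((S2.mul_left _).add (S3.mul_left _))
  have hLHS : (c - a * z) * phi11 a c p ((p : ℂ) * z) + (z - c - (p : ℂ)) * phi11 a c p z +
      (p : ℂ) * phi11 a c p (z / (p : ℂ)) = ∑' j, F j := by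
    rw [phi11_eq, phi11_eq, phi11_eq, ← tsum_mul_left, ← tsum_mul_left, ← tsum_mul_left,
      add_assoc, ← Summable.tsum_add (S2.mul_left _) (S3.mul_left _),
      ← Summable.tsum_add (S1.mul_left _) ((S2.mul_left _).add (S3.mul_left _))]
  have hDlim : Tendsto D atTop (𝓝 0) := by
    have h2 : Tendsto (fun j : ℕ => tcoef a c (p : ℂ) j * z ^ j) atTop (𝓝 0) := S2.tendsto_atTop_zero
    have h3 : Tendsto (fun j : ℕ => tcoef a c (p : ℂ) j * (z / (p : ℂ)) ^ j) atTop (𝓝 0) :=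
      S3.tendsto_atTop_zero
    have hbr : Tendsto (fun j : ℕ => c * (p : ℂ) ^ j - c - (p : ℂ)) atTop
        (𝓝 (c * 0 - c - (p : ℂ))) :=
      ((tendsto_const_nhds.mul hpow).sub tendsto_const_nhds).sub tendsto_const_nhds
    have hc3 : Tendsto (fun _ : ℕ => (p : ℂ)) atTop (𝓝 (p : ℂ)) := tendsto_const_nhds
    have := (h2.mul hbr).add (hc3.mul h3)
    simpa using this
  have hD0 : D 0 = 0 := by
    simp only [hD, tcoef, qPoch, Finset.prod_range_zero, pow_zero]
    ring
  have hpartial : ∀ n : ℕ, ∑ i ∈ Finset.range n, F i = D 0 - D n := by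
    intro n
    rw [Finset.sum_congr rfl (fun i _ => hterm i), Finset.sum_range_sub' D n]
  have h1 : Tendsto (fun n : ℕ => ∑ i ∈ Finset.range n, F i) atTop (𝓝 (∑' j, F j)) :=
    hFsum.hasSum.tendsto_sum_nat
  have h2 : Tendsto (fun n : ℕ => ∑ i ∈ Finset.range n, F i) atTop (𝓝 0) := by
    simp only [hpartial]
    have h3 : Tendsto (fun _ : ℕ => D 0) atTop (𝓝 (D 0)) := tendsto_const_nhds
    have := h3.sub hDlim
    simpa [hD0] using this
  rw [hLHS]
  exact tendsto_nhds_unique h1 h2
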